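/- If φ : K^m × K^k → ℝ is μ^m ⊗ μ^k measurable, then the functions x ↦ ap limsup_{z→0} φ(x,z) and x ↦ ap liminf_{z→0} φ(x,z) are μ^m measurable, where ap limsup_{z→0} φ(x,z) := inf{c ∈ [−∞,∞] : the set {z ∈ K^k : φ(x,z) > c} has μ^k density 0 at 0} and ap liminf_{z→0} φ(x,z) := sup{c ∈ [−∞,∞] : the set {z ∈ K^k : φ(x,z) < c} has μ^k density 0 at 0}. -/

import Mathlib

open MeasureTheory Metric Set Filter Topology Pointwise
open scoped symmDiff

/-- A set `S` has `ν` density `0` (in dimension `d`) at a point `z`, where the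
radii run through the value group `Γ_K = {‖x‖ : x ∈ K, x ≠ 0}`:
`lim_{R → 0, R ∈ Γ_K} ν (S ∩ B(z,R)) / R^d = 0`. -/
def densityZeroAt (K : Type*) [NontriviallyNormedField K] {E : Type*}
    [SeminormedAddCommGroup E] [MeasurableSpace E] (ν : Measure E) (d : ℕ)
    (S : Set E) (z : E) : Prop :=
  Filter.Tendsto (fun R : ℝ => ν (S ∩ Metric.closedBall z R) / ENNReal.ofReal (R ^ d))
    (𝓝[{R : ℝ | ∃ x : K, x ≠ 0 ∧ ‖x‖ = R}] 0) (𝓝 0)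

/-- The value group of a locally compact ultrametric field is countable. -/
lemma stmt4_gamma_countable (K : Type*) [NontriviallyNormedField K] [IsUltrametricDist K]
    [LocallyCompactSpace K] :
    ({R : ℝ | ∃ x : K, x ≠ 0 ∧ ‖x‖ = R}).Countable := by
  have : ProperSpace K := ProperSpace.of_locallyCompactSpace K
  have key : ∀ n : ℕ, ((fun x : K => ‖x‖) ''
      (closedBall (0:K) (n+1) \ ball 0 ((n+1):ℝ)⁻¹)).Finite := by
    intro n
    set s : Set K := closedBall (0:K) (n+1) \ ball 0 ((n+1):ℝ)⁻¹ with hs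
    have hsc : IsCompact s := (isCompact_closedBall _ _).diff isOpen_ball
    have h0 : ∀ x ∈ s, x ≠ 0 := by
      rintro x hx rfl
      exact hx.2 (mem_ball_self (by positivity))
    have hcover : s ⊆ ⋃ x ∈ s, ball x ‖x‖ := fun x hx =>
      mem_biUnion hx (mem_ball_self (norm_pos_iff.2 (h0 x hx)))
    obtain ⟨t, hts, htf, hcov⟩ := hsc.elim_finite_subcover_image
      (fun x _ => isOpen_ball) hcover
    refine (htf.image (fun x => ‖x‖)).subset ?_
    rintro _ ⟨y, hy, rfl⟩
    obtain ⟨x, hx, hyx⟩ := mem_iUnion₂.1 (hcov hy)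
    refine ⟨x, hx, ?_⟩
    have hlt : ‖y - x‖ < ‖x‖ := by rwa [mem_ball, dist_eq_norm] at hyx
    calc ‖x‖ = max ‖x‖ ‖y - x‖ := (max_eq_left hlt.le).symm
    _ = ‖x + (y - x)‖ := (IsUltrametricDist.norm_add_eq_max_of_norm_ne_norm hlt.ne').symm
    _ = ‖y‖ := by ring_nf
  refine Countable.mono ?_ (countable_iUnion (fun n => (key n).countable))
  rintro R ⟨x, hx, rfl⟩
  have hpos : 0 < ‖x‖ := norm_pos_iff.2 hx
  obtain ⟨n, hn⟩ := exists_nat_gt (max ‖x‖ ‖x‖⁻¹)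
  refine mem_iUnion.2 ⟨n, ⟨x, ⟨?_, ?_⟩, rfl⟩⟩
  · simp only [mem_closedBall, dist_zero_right]
    exact le_trans (le_max_left _ _) (by linarith [hn])
  · simp only [mem_ball, dist_zero_right, not_lt]
    have h2 : ‖x‖⁻¹ < n+1 := lt_of_le_of_lt (le_max_right ‖x‖ _) (by linarith [hn])
    exact le_of_lt ((inv_lt_comm₀ (by positivity : (0:ℝ) < (n:ℝ)+1) hpos).2 h2)

/-- The slice-measure function of a null measurable set is null measurable. -/
lemma stmt4_slice_nullMeasurable {α β : Type*} [MeasurableSpace α] [MeasurableSpace β]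
    {μ : Measure α} {ν : Measure β} [SFinite ν] {s : Set (α × β)}
    (hs : NullMeasurableSet s (μ.prod ν)) {B : Set β} (hB : MeasurableSet B) :
    NullMeasurable (fun x => ν (Prod.mk x ⁻¹' s ∩ B)) μ := by
  obtain ⟨t, hst, ht, hts⟩ := hs.exists_measurable_superset_ae_eq
  have hsymm : (μ.prod ν) (s ∆ t) = 0 := measure_symmDiff_eq_zero_iff.2 hts.symm
  have hae := Measure.measure_ae_null_of_prod_null hsymm
  have hmeas : Measurable (fun x => ν (Prod.mk x ⁻¹' (t ∩ univ ×ˢ B))) :=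
    measurable_measure_prodMk_left (ht.inter (MeasurableSet.univ.prod hB))
  refine (hmeas.nullMeasurable).congr ?_
  filter_upwards [hae] with x hx
  have h1 : Prod.mk x ⁻¹' (t ∩ univ ×ˢ B) = Prod.mk x ⁻¹' t ∩ B := by
    ext z; simp
  rw [h1]
  refine (measure_congr ?_).symm
  rw [← measure_symmDiff_eq_zero_iff]
  refine measure_mono_null ?_ hx
  have h2 : (Prod.mk x ⁻¹' s ∩ B) ∆ (Prod.mk x ⁻¹' t ∩ B)
      ⊆ (Prod.mk x ⁻¹' s) ∆ (Prod.mk x ⁻¹' t) := by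
    rw [← Set.inter_symmDiff_distrib_right]
    exact inter_subset_left
  refine h2.trans ?_
  intro z hz
  simpa [Set.mem_symmDiff] using hz

/-- Quantitative reformulation of a tendsto-to-zero condition along `𝓝[Γ] 0`. -/
lemma stmt4_tendsto_iff (Γ : Set ℝ) (f : ℝ → ENNReal) :
    Tendsto f (𝓝[Γ] 0) (𝓝 0) ↔
      ∀ n : ℕ, ∃ j : ℕ, ∀ R ∈ Γ, |R| < ((j:ℝ)+1)⁻¹ → f R ≤ ((n:ENNReal)+1)⁻¹ := by
  constructor
  · intro h n
    have h1 : ∀ᶠ R in 𝓝[Γ] 0, f R ≤ ((n:ENNReal)+1)⁻¹ :=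
      ENNReal.tendsto_nhds_zero.1 h _ (ENNReal.inv_pos.2 (by simp))
    rw [eventually_nhdsWithin_iff, Metric.eventually_nhds_iff] at h1
    obtain ⟨ε, hε, hb⟩ := h1
    obtain ⟨j, hj⟩ := exists_nat_one_div_lt hε
    refine ⟨j, fun R hR habs => hb ?_ hR⟩
    rw [Real.dist_eq, sub_zero]
    refine habs.trans ?_
    rw [one_div] at hj
    exact_mod_cast hj
  · intro h
    rw [ENNReal.tendsto_nhds_zero]
    intro ε hε
    obtain ⟨n, hn⟩ := ENNReal.exists_inv_nat_lt hε.ne'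
    obtain ⟨j, hj⟩ := h n
    rw [eventually_nhdsWithin_iff, Metric.eventually_nhds_iff]
    refine ⟨((j:ℝ)+1)⁻¹, by positivity, fun R hd hR => ?_⟩
    rw [Real.dist_eq, sub_zero] at hd
    refine (hj R hR hd).trans (le_trans ?_ hn.le)
    exact ENNReal.inv_le_inv.2 le_self_add

/-- Having density zero is monotone under inclusion. -/
lemma stmt4_densityZeroAt_mono (K : Type*) [NontriviallyNormedField K] {E : Type*}
    [SeminormedAddCommGroup E] [MeasurableSpace E] {ν : Measure E} {d : ℕ}
    {S T : Set E} {z : E} (hST : S ⊆ T) (hT : densityZeroAt K ν d T z) :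
    densityZeroAt K ν d S z := by
  refine tendsto_of_tendsto_of_tendsto_of_le_of_le tendsto_const_nhds hT
    (fun R => zero_le) (fun R => ?_)
  exact ENNReal.div_le_div_right (measure_mono (inter_subset_inter_left _ hST)) _

/-- Null measurability of `x ↦ sInf {c | P c x}` for an upward-closed predicate. -/
lemma stmt4_nullMeasurable_sInf {α : Type*} [MeasurableSpace α] {μ : Measure α}
    (P : EReal → α → Prop)
    (hmono : ∀ c c' x, c ≤ c' → P c x → P c' x)
    (hP : ∀ q : ℚ, NullMeasurableSet {x | P ((q:ℝ):EReal) x} μ) :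
    NullMeasurable (fun x => sInf {c | P c x}) μ := by
  have key : ∀ a : EReal, (fun x => sInf {c | P c x}) ⁻¹' (Iio a) =
      ⋃ (q : ℚ) (_ : ((q:ℝ):EReal) < a), {x | P ((q:ℝ):EReal) x} := by
    intro a
    ext x
    simp only [mem_preimage, mem_Iio, mem_iUnion, mem_setOf_eq]
    constructor
    · intro h
      obtain ⟨c, hc, hca⟩ := sInf_lt_iff.1 h
      obtain ⟨q, hcq, hqa⟩ := EReal.exists_rat_btwn_of_lt hca
      exact ⟨q, hqa, hmono c ((q:ℝ):EReal) x hcq.le hc⟩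
    · rintro ⟨q, hqa, hq⟩
      exact lt_of_le_of_lt (sInf_le hq) hqa
  exact measurable_of_Iio (α := EReal) (δ := NullMeasurableSpace α μ) (fun a => by
    change NullMeasurableSet ((fun x => sInf {c | P c x}) ⁻¹' Iio a) μ
    rw [key a]; exact .iUnion fun q => .iUnion fun _ => hP q)

/-- Null measurability of `x ↦ sSup {c | P c x}` for a downward-closed predicate. -/
lemma stmt4_nullMeasurable_sSup {α : Type*} [MeasurableSpace α] {μ : Measure α}
    (P : EReal → α → Prop)
    (hmono : ∀ c c' x, c' ≤ c → P c x → P c' x)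
    (hP : ∀ q : ℚ, NullMeasurableSet {x | P ((q:ℝ):EReal) x} μ) :
    NullMeasurable (fun x => sSup {c | P c x}) μ := by
  have key : ∀ a : EReal, (fun x => sSup {c | P c x}) ⁻¹' (Ioi a) =
      ⋃ (q : ℚ) (_ : a < ((q:ℝ):EReal)), {x | P ((q:ℝ):EReal) x} := by
    intro a
    ext x
    simp only [mem_preimage, mem_Ioi, mem_iUnion, mem_setOf_eq]
    constructor
    · intro h
      obtain ⟨c, hc, hca⟩ := lt_sSup_iff.1 h
      obtain ⟨q, hcq, hqa⟩ := EReal.exists_rat_btwn_of_lt hca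
      exact ⟨q, hcq, hmono c ((q:ℝ):EReal) x hqa.le hc⟩
    · rintro ⟨q, hqa, hq⟩
      exact lt_of_lt_of_le hqa (le_sSup hq)
  exact measurable_of_Ioi (α := EReal) (δ := NullMeasurableSpace α μ) (fun a => by
    change NullMeasurableSet ((fun x => sSup {c | P c x}) ⁻¹' Ioi a) μ
    rw [key a]; exact .iUnion fun q => .iUnion fun _ => hP q)

/-- For a fixed null measurable set `s` in the product, the set of `x` whose slice has
density zero at `0` is null measurable. -/
lemma stmt4_density_set_nullMeasurable {K : Type*} [NontriviallyNormedField K]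
    [IsUltrametricDist K] [LocallyCompactSpace K]
    {α β : Type*} [MeasurableSpace α] [MeasurableSpace β]
    [SeminormedAddCommGroup β]
    {μ : Measure α} {ν : Measure β} [SFinite ν]
    (hball : ∀ R : ℝ, MeasurableSet (Metric.closedBall (0:β) R))
    {d : ℕ} {s : Set (α × β)} (hs : NullMeasurableSet s (μ.prod ν)) :
    NullMeasurableSet {x | densityZeroAt K ν d (Prod.mk x ⁻¹' s) 0} μ := by
  set Γ : Set ℝ := {R : ℝ | ∃ x : K, x ≠ 0 ∧ ‖x‖ = R} with hΓ
  have hΓc : Γ.Countable := stmt4_gamma_countable K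
  have hset : {x | densityZeroAt K ν d (Prod.mk x ⁻¹' s) 0} =
      ⋂ n : ℕ, ⋃ j : ℕ, ⋂ R ∈ Γ,
        {x | |R| < ((j:ℝ)+1)⁻¹ →
          ν (Prod.mk x ⁻¹' s ∩ Metric.closedBall 0 R) / ENNReal.ofReal (R ^ d)
            ≤ ((n:ENNReal)+1)⁻¹} := by
    ext x
    simp only [mem_setOf_eq, mem_iInter, mem_iUnion, densityZeroAt, stmt4_tendsto_iff Γ]
    exact stmt4_tendsto_iff Γ _
  rw [hset]
  refine NullMeasurableSet.iInter (fun n => NullMeasurableSet.iUnion (fun j =>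
    NullMeasurableSet.biInter hΓc (fun R _ => ?_)))
  by_cases hR : |R| < ((j:ℝ)+1)⁻¹
  · have : {x | |R| < ((j:ℝ)+1)⁻¹ →
        ν (Prod.mk x ⁻¹' s ∩ Metric.closedBall 0 R) / ENNReal.ofReal (R ^ d)
          ≤ ((n:ENNReal)+1)⁻¹} =
        (fun x => ν (Prod.mk x ⁻¹' s ∩ Metric.closedBall 0 R)) ⁻¹'
          {y : ENNReal | y / ENNReal.ofReal (R ^ d) ≤ ((n:ENNReal)+1)⁻¹} := by
      ext x; simp [hR]
    rw [this]
    exact (stmt4_slice_nullMeasurable hs (hball R))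
      ((measurable_id.div_const _) measurableSet_Iic)
  · have : {x | |R| < ((j:ℝ)+1)⁻¹ →
        ν (Prod.mk x ⁻¹' s ∩ Metric.closedBall 0 R) / ENNReal.ofReal (R ^ d)
          ≤ ((n:ENNReal)+1)⁻¹} = univ := by
      ext x; simp [hR]
    rw [this]
    exact MeasurableSet.univ.nullMeasurableSet

/-- Lemma 11. -/
theorem stmt4 {K : Type*} [NontriviallyNormedField K] [IsUltrametricDist K]
    [LocallyCompactSpace K] [MeasurableSpace K] [BorelSpace K]
    (μ : Measure K) [μ.IsAddHaarMeasure]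
    (hμ1 : μ (closedBall (0 : K) 1) = 1)
    (hμs : ∀ (a : K) (A : Set K), μ (a • A) = (‖a‖₊ : ENNReal) * μ A)
    {m k : ℕ}
    (φ : (Fin m → K) × (Fin k → K) → ℝ)
    (hφ : NullMeasurable φ
      ((Measure.pi fun _ : Fin m => μ).prod (Measure.pi fun _ : Fin k => μ))) :
    NullMeasurable
      (fun x : Fin m → K =>
        sInf {c : EReal | densityZeroAt K (Measure.pi fun _ : Fin k => μ) k
          {z : Fin k → K | c < (φ (x, z) : EReal)} 0})
      (Measure.pi fun _ : Fin m => μ) ∧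
    NullMeasurable
      (fun x : Fin m → K =>
        sSup {c : EReal | densityZeroAt K (Measure.pi fun _ : Fin k => μ) k
          {z : Fin k → K | (φ (x, z) : EReal) < c} 0})
      (Measure.pi fun _ : Fin m => μ) := by
  haveI : ProperSpace K := ProperSpace.of_locallyCompactSpace K
  set ν : Measure (Fin k → K) := Measure.pi fun _ : Fin k => μ with hν
  set μm : Measure (Fin m → K) := Measure.pi fun _ : Fin m => μ with hμm
  have hball : ∀ R : ℝ, MeasurableSet (Metric.closedBall (0 : Fin k → K) R) :=
    fun R => measurableSet_closedBall
  constructor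
  · refine stmt4_nullMeasurable_sInf _ (fun c c' x hcc' h => ?_) (fun q => ?_)
    · exact stmt4_densityZeroAt_mono K
        (fun z hz => lt_of_le_of_lt hcc' hz) h
    · have hs : NullMeasurableSet (φ ⁻¹' Ioi (q:ℝ)) (μm.prod ν) := hφ measurableSet_Ioi
      have heq : ∀ x : Fin m → K,
          {z : Fin k → K | ((q:ℝ):EReal) < (φ (x, z) : EReal)} =
          Prod.mk x ⁻¹' (φ ⁻¹' Ioi (q:ℝ)) := by
        intro x; ext z
        simp [EReal.coe_lt_coe_iff]
      have := stmt4_density_set_nullMeasurable (K := K) (μ := μm) (ν := ν) hball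
        (d := k) hs
      simpa only [heq] using this
  · refine stmt4_nullMeasurable_sSup _ (fun c c' x hcc' h => ?_) (fun q => ?_)
    · exact stmt4_densityZeroAt_mono K
        (fun z hz => lt_of_lt_of_le hz hcc') h
    · have hs : NullMeasurableSet (φ ⁻¹' Iio (q:ℝ)) (μm.prod ν) := hφ measurableSet_Iio
      have heq : ∀ x : Fin m → K,
          {z : Fin k → K | (φ (x, z) : EReal) < ((q:ℝ):EReal)} =
          Prod.mk x ⁻¹' (φ ⁻¹' Iio (q:ℝ)) := by
        intro x; ext z
        simp [EReal.coe_lt_coe_iff]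
      have := stmt4_density_set_nullMeasurable (K := K) (μ := μm) (ν := ν) hball
        (d := k) hs
      simpa only [heq] using this
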